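/- Let m_beta = liminf_{t -> infinity} |Pi_1| where Pi_1 = prod_{alpha=0}^{t-1} ((1 - 2 beta) + 2 beta cos(2 pi 2^alpha / (2^t - 1))) for 0 < beta < 1/4. Then lim_{beta -> 0+} m_beta = 1. -/

import Mathlib

open Filter Finset Real

/-- Weierstrass product inequality: `∏ (1 - x i) ≥ 1 - ∑ x i` for `x i ∈ [0,1]`. -/
lemma weier_aux {ι : Type*} (s : Finset ι) (x : ι → ℝ) (h0 : ∀ i ∈ s, 0 ≤ x i)
    (h1 : ∀ i ∈ s, x i ≤ 1) : 1 - ∑ i ∈ s, x i ≤ ∏ i ∈ s, (1 - x i) := by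
  classical
  induction s using Finset.induction with
  | empty => simp
  | @insert a s hnot ih =>
    have ha0 := h0 a (mem_insert_self a s)
    have ha1 := h1 a (mem_insert_self a s)
    have ih' := ih (fun i hi => h0 i (mem_insert_of_mem hi)) (fun i hi => h1 i (mem_insert_of_mem hi))
    rw [Finset.sum_insert hnot, Finset.prod_insert hnot]
    have hP : (0:ℝ) ≤ ∏ i ∈ s, (1 - x i) :=
      Finset.prod_nonneg fun i hi => by linarith [h1 i (mem_insert_of_mem hi)]
    have hS : (0:ℝ) ≤ ∑ i ∈ s, x i := Finset.sum_nonneg fun i hi => h0 i (mem_insert_of_mem hi)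
    nlinarith [mul_le_mul_of_nonneg_left ih' (by linarith : (0:ℝ) ≤ 1 - x a)]

lemma sum_one_sub_cos_aux (t : ℕ) (ht : 1 ≤ t) :
    ∑ α ∈ Finset.range t, (1 - Real.cos (2 * Real.pi * 2^α / ((2:ℝ)^t - 1)))
      ≤ 2 * Real.pi ^ 2 := by
  have h2t : (2:ℝ) ≤ (2:ℝ)^t := by
    calc (2:ℝ) = 2^1 := (pow_one 2).symm
    _ ≤ 2^t := pow_le_pow_right₀ (by norm_num) ht
  have hd : (0:ℝ) < (2:ℝ)^t - 1 := by linarith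
  have hstep : ∀ α ∈ Finset.range t,
      1 - Real.cos (2 * Real.pi * 2^α / ((2:ℝ)^t - 1))
        ≤ (2 * Real.pi ^ 2 / ((2:ℝ)^t - 1)^2) * (4:ℝ)^α := by
    intro α _
    have := Real.one_sub_sq_div_two_le_cos (x := 2 * Real.pi * 2^α / ((2:ℝ)^t - 1))
    have h4 : ((2:ℝ)^α)^2 = (4:ℝ)^α := by
      rw [← pow_mul, mul_comm, pow_mul]; norm_num
    have : 1 - Real.cos (2 * Real.pi * 2^α / ((2:ℝ)^t - 1))
        ≤ (2 * Real.pi * 2^α / ((2:ℝ)^t - 1))^2 / 2 := by linarith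
    calc 1 - Real.cos (2 * Real.pi * 2^α / ((2:ℝ)^t - 1))
        ≤ (2 * Real.pi * 2^α / ((2:ℝ)^t - 1))^2 / 2 := this
      _ = (2 * Real.pi ^ 2 / ((2:ℝ)^t - 1)^2) * (4:ℝ)^α := by
          rw [div_pow, mul_pow, mul_pow, ← h4]; ring
  calc ∑ α ∈ Finset.range t, (1 - Real.cos (2 * Real.pi * 2^α / ((2:ℝ)^t - 1)))
      ≤ ∑ α ∈ Finset.range t, (2 * Real.pi ^ 2 / ((2:ℝ)^t - 1)^2) * (4:ℝ)^α :=
        Finset.sum_le_sum hstep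
    _ = (2 * Real.pi ^ 2 / ((2:ℝ)^t - 1)^2) * (((4:ℝ)^t - 1) / (4 - 1)) := by
        rw [← Finset.mul_sum, geom_sum_eq (by norm_num)]
    _ ≤ 2 * Real.pi ^ 2 := by
        have h4t : (4:ℝ)^t = ((2:ℝ)^t)^2 := by
          rw [← pow_mul, mul_comm, pow_mul]; norm_num
        have hkey : ((4:ℝ)^t - 1) / (4 - 1) ≤ ((2:ℝ)^t - 1)^2 := by
          rw [div_le_iff₀ (by norm_num)]
          nlinarith [mul_nonneg (by linarith : (0:ℝ) ≤ (2:ℝ)^t - 1) (by linarith : (0:ℝ) ≤ (2:ℝ)^t - 2)]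
        calc (2 * Real.pi ^ 2 / ((2:ℝ)^t - 1)^2) * (((4:ℝ)^t - 1) / (4 - 1))
            ≤ (2 * Real.pi ^ 2 / ((2:ℝ)^t - 1)^2) * (((2:ℝ)^t - 1)^2) :=
              mul_le_mul_of_nonneg_left hkey (by positivity)
          _ = 2 * Real.pi ^ 2 := by field_simp

/-- with `m_β = liminf_{t→∞} |Π₁|` where
`Π₁ = ∏_{α<t} ((1-2β) + 2β cos(2π 2^α/(2^t-1)))` for `0 < β < 1/4`,
one has `m_β → 1` as `β → 0⁺`. -/
theorem liminf_Pi_one_tendsto_one :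
    Filter.Tendsto (fun β : ℝ => Filter.liminf (fun t : ℕ =>
        ∏ α ∈ Finset.range t,
          ((1 - 2*β) + 2*β * Real.cos (2 * Real.pi * 2^α / ((2:ℝ)^t - 1)))) Filter.atTop)
      (nhdsWithin 0 (Set.Ioo (0:ℝ) (1/4))) (nhds 1) := by
  set F : ℝ → ℕ → ℝ := fun β t => ∏ α ∈ Finset.range t,
      ((1 - 2*β) + 2*β * Real.cos (2 * Real.pi * 2^α / ((2:ℝ)^t - 1))) with hF
  have key : ∀ β ∈ Set.Ioo (0:ℝ) (1/4),
      1 - 4 * Real.pi ^ 2 * β ≤ Filter.liminf (F β) Filter.atTop ∧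
      Filter.liminf (F β) Filter.atTop ≤ 1 := by
    intro β hβ
    obtain ⟨hβ0, hβ4⟩ := hβ
    have hub : ∀ t, F β t ≤ 1 := by
      intro t
      apply Finset.prod_le_one
      · intro α _
        have := Real.neg_one_le_cos (2 * Real.pi * 2^α / ((2:ℝ)^t - 1))
        nlinarith
      · intro α _
        have := Real.cos_le_one (2 * Real.pi * 2^α / ((2:ℝ)^t - 1))
        nlinarith
    have hlb : ∀ t, 1 - 4 * Real.pi ^ 2 * β ≤ F β t := by
      intro t
      rcases Nat.eq_zero_or_pos t with ht | ht
      · subst ht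
        simp only [hF, Finset.range_zero, Finset.prod_empty]
        nlinarith [Real.pi_pos]
      · have hrw : F β t = ∏ α ∈ Finset.range t,
            (1 - 2*β*(1 - Real.cos (2 * Real.pi * 2^α / ((2:ℝ)^t - 1)))) := by
          apply Finset.prod_congr rfl; intro α _; ring
        rw [hrw]
        have h0 : ∀ α ∈ Finset.range t,
            0 ≤ 2*β*(1 - Real.cos (2 * Real.pi * 2^α / ((2:ℝ)^t - 1))) := by
          intro α _
          have := Real.cos_le_one (2 * Real.pi * 2^α / ((2:ℝ)^t - 1))
          nlinarith
        have h1 : ∀ α ∈ Finset.range t,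
            2*β*(1 - Real.cos (2 * Real.pi * 2^α / ((2:ℝ)^t - 1))) ≤ 1 := by
          intro α _
          have := Real.neg_one_le_cos (2 * Real.pi * 2^α / ((2:ℝ)^t - 1))
          nlinarith
        have hw := weier_aux (Finset.range t) _ h0 h1
        have hsum : ∑ α ∈ Finset.range t,
            2*β*(1 - Real.cos (2 * Real.pi * 2^α / ((2:ℝ)^t - 1))) ≤ 4 * Real.pi ^ 2 * β := by
          rw [← Finset.mul_sum]
          have := sum_one_sub_cos_aux t ht
          nlinarith
        linarith
    constructor
    · have hcob : Filter.IsCoboundedUnder (· ≥ ·) Filter.atTop (F β) :=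
        Filter.isCoboundedUnder_ge_of_eventually_le _ (Filter.Eventually.of_forall hub)
      have hev : ∀ᶠ t in (Filter.atTop : Filter ℕ), 1 - 4 * Real.pi ^ 2 * β ≤ F β t :=
        Filter.Eventually.of_forall hlb
      exact Filter.le_liminf_of_le hcob hev
    · refine Filter.liminf_le_of_le ⟨1 - 4 * Real.pi ^ 2 * β,
        Filter.eventually_map.2 (Filter.Eventually.of_forall hlb)⟩ ?_
      intro b hb
      obtain ⟨n, hn⟩ := (hb.and (Filter.Eventually.of_forall hub)).exists
      linarith [hn.1, hn.2]
  have hlow : Filter.Tendsto (fun β : ℝ => 1 - 4 * Real.pi ^ 2 * β)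
      (nhdsWithin 0 (Set.Ioo (0:ℝ) (1/4))) (nhds 1) := by
    have hc : Continuous fun β : ℝ => 1 - 4 * Real.pi ^ 2 * β := by continuity
    have := (hc.tendsto 0).mono_left
      (nhdsWithin_le_nhds (s := Set.Ioo (0:ℝ) (1/4)))
    simpa using this
  refine tendsto_of_tendsto_of_tendsto_of_le_of_le' hlow tendsto_const_nhds ?_ ?_
  · exact eventually_nhdsWithin_of_forall fun β hβ => (key β hβ).1
  · exact eventually_nhdsWithin_of_forall fun β hβ => (key β hβ).2
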